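/- Removing a winner only promotes lower-density bids: for every family of bids B and every winner j ∈ W(B), every index i ≠ j that precedes j in the density-sorted order of B receives the same grant decision under GRP-A applied to B as under GRP-A applied to B_{-j} (B with bid j removed); consequently every index in W(B_{-j}) \ W(B) has density at most e(b_j), and hence the competitor density e_j^comp satisfies e_j^comp ≤ e(b_j). -/

import Mathlib

open Classical Finset

noncomputable section

/-- A bundle: requested amounts of each of the `k` VM types. -/
abbrev Bundle (k : ℕ) := Fin k → ℕ

/-- A bid: a bundle together with a declared valuation. -/
abbrev Bid (k : ℕ) := Bundle k × ℝ

/-- A bundle is nonzero if some coordinate is positive. -/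
def nonzeroBundle {k : ℕ} (d : Bundle k) : Prop := ∃ i, 0 < d i

/-- A valid bid requests a nonzero bundle and declares a nonnegative valuation. -/
def validBid {k : ℕ} (b : Bid k) : Prop := nonzeroBundle b.1 ∧ 0 ≤ b.2

/-- The weighted bundle size `d̂(d) = Σ_i (d i)·(f i)`. -/
def dhat {k : ℕ} (f : Fin k → ℝ) (d : Bundle k) : ℝ := ∑ i, (d i : ℝ) * f i

/-- The bundle reserve price `ô(d) = Σ_i (d i)·(o i)`. -/
def ohat {k : ℕ} (o : Fin k → ℝ) (d : Bundle k) : ℝ := ∑ i, (d i : ℝ) * o i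

/-- The bid density `e(d, v) = v / (d̂ d)^q`. -/
def density {k : ℕ} (f : Fin k → ℝ) (q : ℝ) (b : Bid k) : ℝ := b.2 / (dhat f b.1) ^ q

/-- The indices of the active set `A`, sorted in non-increasing order of bid density;
`mergeSort` is stable and `A.sort (· ≤ ·)` lists indices increasingly, so ties are
broken by smaller index first. -/
def sortedBids {k n : ℕ} (f : Fin k → ℝ) (q : ℝ) (B : Fin n → Bid k) (A : Finset (Fin n)) :
    List (Fin n) :=
  (A.sort (· ≤ ·)).mergeSort (fun i j => decide (density f q (B j) ≤ density f q (B i)))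

/-- Greedy-RP allocation scheme (GRP-A) run on the active index set `A`: process the
indices in non-increasing density order and grant an index whenever both the available
resource constraint (ARC) and the reserve price constraint (RPC) hold. -/
def grants {k n : ℕ} (o f : Fin k → ℝ) (s : Fin k → ℕ) (q : ℝ) (B : Fin n → Bid k)
    (A : Finset (Fin n)) : Finset (Fin n) :=
  (sortedBids f q B A).foldl
    (fun W j =>
      if (∀ i, (B j).1 i + ∑ j' ∈ W, (B j').1 i ≤ s i) ∧ ohat o (B j).1 ≤ (B j).2
      then insert j W else W) ∅

/-- `W(B)`: the winners of GRP-A run on all bids. -/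
def winners {k n : ℕ} (o f : Fin k → ℝ) (s : Fin k → ℕ) (q : ℝ) (B : Fin n → Bid k) :
    Finset (Fin n) :=
  grants o f s q B Finset.univ

/-- `W'_j = W(B_{-j}) \ W(B)`: the new winners once bid `j` is removed. -/
def competitorSet {k n : ℕ} (o f : Fin k → ℝ) (s : Fin k → ℕ) (q : ℝ) (B : Fin n → Bid k)
    (j : Fin n) : Finset (Fin n) :=
  grants o f s q B (Finset.univ.erase j) \ winners o f s q B

/-- The competitor density `e_j^comp`: the maximum density over `W'_j`, or `0` if
`W'_j` is empty. -/
def ecomp {k n : ℕ} (o f : Fin k → ℝ) (s : Fin k → ℕ) (q : ℝ) (B : Fin n → Bid k)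
    (j : Fin n) : ℝ :=
  if h : (competitorSet o f s q B j).Nonempty
  then (competitorSet o f s q B j).sup' h (fun i => density f q (B i))
  else 0

/-- The bid-specific reserve density `e_res(b) = ô(d)/(d̂ d)^q`. -/
def eres {k : ℕ} (o f : Fin k → ℝ) (q : ℝ) (b : Bid k) : ℝ := ohat o b.1 / (dhat f b.1) ^ q

/-- Greedy-RP pricing scheme (GRP-P): a winner `j` pays
`p_j = max(e_j^comp, e_res(b_j)) · (d̂ d_j)^q`; a non-winner pays `0`. -/
def payment {k n : ℕ} (o f : Fin k → ℝ) (s : Fin k → ℕ) (q : ℝ) (B : Fin n → Bid k)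
    (j : Fin n) : ℝ :=
  if j ∈ winners o f s q B
  then max (ecomp o f s q B j) (eres o f q (B j)) * (dhat f (B j).1) ^ q
  else 0

section Helpers

variable {ι : Type*} [DecidableEq ι]

/-- In a nodup list, a pair and its swap can both be sublists only if equal. -/
lemma eq_of_pair_sublists : ∀ {m : List ι} {a b : ι}, m.Nodup →
    [a, b].Sublist m → [b, a].Sublist m → a = b := by
  intro m
  induction m with
  | nil => intro a b _ h1 _; simp at h1
  | cons c t ih =>
    intro a b hm h1 h2
    rcases hm with - | ⟨hct, ht⟩
    cases h1 with
    | cons _ h1' =>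
      cases h2 with
      | cons _ h2' => exact ih ht h1' h2'
      | cons_cons _ h2' =>
        exact absurd (h1'.mem (List.mem_cons_of_mem _ (List.mem_singleton_self _)))
          (fun h => hct _ h rfl)
    | cons_cons _ h1' =>
      -- a = c, [b] <+ t
      cases h2 with
      | cons _ h2' =>
        exact absurd (h2'.mem (List.mem_cons_of_mem _ (List.mem_singleton_self _)))
          (fun h => hct _ h rfl)
      | cons_cons _ h2' => rfl

/-- In a `<`-sorted list, any two members align as a sublist. -/
lemma pair_sublist_of_sorted_lt [Preorder ι] :
    ∀ {m : List ι} {a b : ι}, m.Pairwise (· < ·) → a ∈ m → b ∈ m → a < b →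
    [a, b].Sublist m := by
  intro m
  induction m with
  | nil => intro a b _ ha; simp at ha
  | cons c t ih =>
    intro a b hs ha hb hab
    rcases hs with - | ⟨hct, ht⟩
    rcases List.mem_cons.mp ha with rfl | ha'
    · have hb' : b ∈ t := by
        rcases List.mem_cons.mp hb with rfl | hb'
        · exact absurd hab (lt_irrefl _)
        · exact hb'
      exact List.Sublist.cons₂ _ (List.singleton_sublist.mpr hb')
    · have hb' : b ∈ t := by
        rcases List.mem_cons.mp hb with rfl | hb'
        · exact absurd (lt_trans (hct a ha') hab) (lt_irrefl _)
        · exact hb'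
      exact List.Sublist.cons _ (ih ht ha' hb' hab)

/-- Fold-membership: an element not in the list keeps its membership status. -/
lemma mem_foldl_of_not_mem (g : Finset ι → ι → Finset ι)
    (hg : ∀ W x i, i ≠ x → (i ∈ g W x ↔ i ∈ W)) :
    ∀ (l : List ι) (W : Finset ι) (i : ι), i ∉ l → (i ∈ l.foldl g W ↔ i ∈ W) := by
  intro l
  induction l with
  | nil => intro W i _; rfl
  | cons c t ih =>
    intro W i hi
    simp only [List.mem_cons, not_or] at hi
    rw [List.foldl_cons, ih _ _ hi.2, hg _ _ _ hi.1]

lemma mem_foldl_imp (g : Finset ι → ι → Finset ι)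
    (hg : ∀ W x i, i ∈ g W x → i = x ∨ i ∈ W) :
    ∀ (l : List ι) (W : Finset ι) (i : ι), i ∈ l.foldl g W → i ∈ W ∨ i ∈ l := by
  intro l
  induction l with
  | nil => intro W i h; exact Or.inl h
  | cons c t ih =>
    intro W i h
    rcases ih _ _ h with h' | h'
    · rcases hg _ _ _ h' with rfl | h''
      · exact Or.inr (List.mem_cons_self)
      · exact Or.inl h''
    · exact Or.inr (List.mem_cons_of_mem _ h')

/-- Removing an element from the processing list does not change the fold decision
for elements strictly earlier in the list. -/
lemma mem_foldl_erase (g : Finset ι → ι → Finset ι)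
    (hg : ∀ W x i, i ≠ x → (i ∈ g W x ↔ i ∈ W)) :
    ∀ (m : List ι) (W : Finset ι) (j i : ι), m.Nodup → i ≠ j →
      m.idxOf i < m.idxOf j →
      (i ∈ m.foldl g W ↔ i ∈ (m.erase j).foldl g W) := by
  intro m
  induction m with
  | nil => intro W j i _ _ h; simp at h
  | cons c t ih =>
    intro W j i hm hij hlt
    rcases hm with - | ⟨hct, ht⟩
    by_cases hcj : c = j
    · subst hcj
      rw [List.idxOf_cons_self] at hlt
      exact absurd hlt (Nat.not_lt_zero _)
    · rw [List.erase_cons_tail (by simpa using hcj)]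
      by_cases hic : i = c
      · subst hic
        have hit : i ∉ t := fun h => (hct i h) rfl
        have hit' : i ∉ t.erase j := fun h => hit (List.mem_of_mem_erase h)
        rw [List.foldl_cons, List.foldl_cons,
          mem_foldl_of_not_mem g hg _ _ _ hit, mem_foldl_of_not_mem g hg _ _ _ hit']
      · rw [List.idxOf_cons_ne _ (Ne.symm hic), List.idxOf_cons_ne _ hcj] at hlt
        rw [List.foldl_cons, List.foldl_cons]
        exact ih _ j i ht hij (Nat.succ_lt_succ_iff.mp hlt)

lemma pairwise_of_indexOf_lt {R : ι → ι → Prop} {m : List ι} (h : m.Pairwise R)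
    {i j : ι} (hi : i ∈ m) (hj : j ∈ m) (hij : m.idxOf i < m.idxOf j) : R i j := by
  have hi' := List.idxOf_lt_length_iff.mpr hi
  have hj' := List.idxOf_lt_length_iff.mpr hj
  have := List.pairwise_iff_getElem.mp h _ _ hi' hj' hij
  rwa [List.getElem_idxOf, List.getElem_idxOf] at this

end Helpers

section SortLemmas

variable {N : ℕ} (e : Fin N → ℝ)

/-- The tie-broken strict-ish order realized by the stable sort. -/
def Rord (a b : Fin N) : Prop := e b < e a ∨ (e a = e b ∧ a ≤ b)

lemma Rord_antisymm {a b : Fin N} (h1 : Rord e a b) (h2 : Rord e b a) : a = b := by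
  rcases h1 with h1 | ⟨h1, h1'⟩ <;> rcases h2 with h2 | ⟨h2, h2'⟩
  · exact absurd (lt_trans h1 h2) (lt_irrefl _)
  · exact absurd h1 (by rw [h2]; exact lt_irrefl _)
  · exact absurd h2 (by rw [h1]; exact lt_irrefl _)
  · exact le_antisymm h1' h2'

lemma le_trans_bool : ∀ a b c : Fin N, (decide (e b ≤ e a)) = true →
    (decide (e c ≤ e b)) = true → (decide (e c ≤ e a)) = true := by
  intro a b c h1 h2
  simp only [decide_eq_true_eq] at *
  exact le_trans h2 h1

lemma le_total_bool : ∀ a b : Fin N, (decide (e b ≤ e a) || decide (e a ≤ e b)) = true := by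
  intro a b
  simpa using le_total (e b) (e a)

/-- The stable merge sort of an increasingly-indexed list is pairwise `Rord`. -/
lemma pairwise_Rord (A : Finset (Fin N)) :
    ((A.sort (· ≤ ·)).mergeSort (fun i j => decide (e j ≤ e i))).Pairwise (Rord e) := by
  set le : Fin N → Fin N → Bool := fun i j => decide (e j ≤ e i) with hle
  have hsorted := List.pairwise_mergeSort (le := le) (le_trans_bool e) (le_total_bool e)
    (A.sort (· ≤ ·))
  have hnodup : ((A.sort (· ≤ ·)).mergeSort le).Nodup :=
    (List.mergeSort_perm _ _).nodup_iff.mpr (Finset.sort_nodup _ _)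
  rw [List.pairwise_iff_forall_sublist]
  intro a b hab
  have hba : e b ≤ e a := by
    have := List.pairwise_iff_forall_sublist.mp hsorted hab
    simpa [hle] using this
  by_cases hlt : e b < e a
  · exact Or.inl hlt
  · have heq : e a = e b := le_antisymm (not_lt.mp hlt) hba
    refine Or.inr ⟨heq, ?_⟩
    by_contra hba'
    have hba'' : b < a := lt_of_not_ge hba'
    have ha : a ∈ A.sort (· ≤ ·) := List.mem_mergeSort.mp (hab.mem (by simp))
    have hb : b ∈ A.sort (· ≤ ·) := List.mem_mergeSort.mp (hab.mem (by simp))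
    have hsub : [b, a].Sublist (A.sort (· ≤ ·)) :=
      pair_sublist_of_sorted_lt (List.sortedLT_iff_pairwise.mp (Finset.sortedLT_sort A)) hb ha hba''
    have hleba : le b a = true := by simp [hle, heq]
    have hsub' := List.pair_sublist_mergeSort (le_trans_bool e) (le_total_bool e) hleba hsub
    exact absurd (eq_of_pair_sublists hnodup hab hsub') (ne_of_gt hba'')

end SortLemmas

section EraseLemma

lemma sortedBids_erase {k n : ℕ} (f : Fin k → ℝ) (q : ℝ) (B : Fin n → Bid k) (j : Fin n) :
    sortedBids f q B (Finset.univ.erase j) = (sortedBids f q B Finset.univ).erase j := by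
  classical
  set e : Fin n → ℝ := fun i => density f q (B i) with he
  haveI : IsAntisymm (Fin n) (Rord e) := ⟨fun a b h1 h2 => Rord_antisymm e h1 h2⟩
  have h1 : (sortedBids f q B (Finset.univ.erase j)).Perm ((Finset.univ.erase j).sort (· ≤ ·)) :=
    List.mergeSort_perm _ _
  have h2 : ((sortedBids f q B Finset.univ).erase j).Perm
      (((Finset.univ : Finset (Fin n)).sort (· ≤ ·)).erase j) :=
    (List.mergeSort_perm _ _).erase j
  have h3 : ((Finset.univ.erase j).sort (· ≤ ·)).Perm
      (((Finset.univ : Finset (Fin n)).sort (· ≤ ·)).erase j) := by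
    rw [← Multiset.coe_eq_coe, ← Multiset.coe_erase, Finset.sort_eq, Finset.sort_eq,
      Finset.erase_val]
  have hperm : (sortedBids f q B (Finset.univ.erase j)).Perm
      ((sortedBids f q B Finset.univ).erase j) := h1.trans (h3.trans h2.symm)
  exact List.Perm.eq_of_pairwise' (pairwise_Rord e _)
    ((pairwise_Rord e Finset.univ).sublist List.erase_sublist) hperm

end EraseLemma

/-- removing a winner only promotes lower-density bids. For a winner
`j ∈ W(B)`: (a) every index `i ≠ j` preceding `j` in the density-sorted order of `B`
receives the same grant decision under GRP-A applied to `B` as under GRP-A applied to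
`B_{-j}` (`B` with bid `j` removed); (b) consequently every index in
`W(B_{-j}) \ W(B)` has density at most `e(b_j)`; and (c) the competitor density
satisfies `e_j^comp ≤ e(b_j)`. -/
theorem remove_winner_promotes_lower_density {k n : ℕ} (hk : 1 ≤ k)
    (f o : Fin k → ℝ) (hf : ∀ i, 0 < f i) (ho : ∀ i, 0 ≤ o i)
    (s : Fin k → ℕ) (q : ℝ) (hq : 0 < q)
    (B : Fin n → Bid k) (hB : ∀ i, validBid (B i))
    (j : Fin n) (hwin : j ∈ winners o f s q B) :
    (∀ i, i ≠ j →
        (sortedBids f q B Finset.univ).idxOf i < (sortedBids f q B Finset.univ).idxOf j →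
        (i ∈ winners o f s q B ↔ i ∈ grants o f s q B (Finset.univ.erase j))) ∧
    (∀ i ∈ competitorSet o f s q B j, density f q (B i) ≤ density f q (B j)) ∧
    ecomp o f s q B j ≤ density f q (B j) := by
  classical
  set e : Fin n → ℝ := fun i => density f q (B i) with he
  set g : Finset (Fin n) → Fin n → Finset (Fin n) := fun W j' =>
    if (∀ i, (B j').1 i + ∑ j'' ∈ W, (B j'').1 i ≤ s i) ∧ ohat o (B j').1 ≤ (B j').2
    then insert j' W else W with hg
  have hg_ne : ∀ (W : Finset (Fin n)) x i, i ≠ x → (i ∈ g W x ↔ i ∈ W) := by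
    intro W x i hix
    simp only [hg]
    split_ifs with h
    · simp [Finset.mem_insert, hix]
    · rfl
  have hg_imp : ∀ (W : Finset (Fin n)) x i, i ∈ g W x → i = x ∨ i ∈ W := by
    intro W x i hi
    simp only [hg] at hi
    split_ifs at hi with h
    · exact Finset.mem_insert.mp hi
    · exact Or.inr hi
  set m : List (Fin n) := sortedBids f q B Finset.univ with hm
  have hm_nodup : m.Nodup := (List.mergeSort_perm _ _).nodup_iff.mpr (Finset.sort_nodup _ _)
  have hmem_m : ∀ i : Fin n, i ∈ m := fun i => by
    simp [hm, sortedBids, List.mem_mergeSort, Finset.mem_sort]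
  have hgr : ∀ A : Finset (Fin n), grants o f s q B A = (sortedBids f q B A).foldl g ∅ := by
    intro A; rfl
  have hws : winners o f s q B = m.foldl g ∅ := rfl
  have hge : grants o f s q B (Finset.univ.erase j) = (m.erase j).foldl g ∅ := by
    rw [hgr, sortedBids_erase]
  have parta : ∀ i, i ≠ j → m.idxOf i < m.idxOf j →
      (i ∈ winners o f s q B ↔ i ∈ grants o f s q B (Finset.univ.erase j)) := by
    intro i hij hlt
    rw [hws, hge]
    exact mem_foldl_erase g hg_ne m ∅ j i hm_nodup hij hlt
  have hpw : m.Pairwise (Rord e) := pairwise_Rord e _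
  have partb : ∀ i ∈ competitorSet o f s q B j, density f q (B i) ≤ density f q (B j) := by
    intro i hi
    rw [competitorSet, Finset.mem_sdiff] at hi
    obtain ⟨hi1, hi2⟩ := hi
    have hi1' : i ∈ m.erase j := by
      rcases mem_foldl_imp g hg_imp _ _ _ (hge ▸ hi1) with h | h
      · simp at h
      · exact h
    have hij : i ≠ j := ((List.Nodup.mem_erase_iff hm_nodup).mp hi1').1
    have hnlt : ¬ (m.idxOf i < m.idxOf j) := by
      intro hlt
      exact hi2 ((parta i hij hlt).mpr hi1)
    have hne : m.idxOf i ≠ m.idxOf j := by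
      intro hEq
      apply hij
      have h1 := List.getElem_idxOf (List.idxOf_lt_length_iff.mpr (hmem_m i))
      have h2 := List.getElem_idxOf (List.idxOf_lt_length_iff.mpr (hmem_m j))
      rw [← h1, ← h2]
      congr 1
    have hlt : m.idxOf j < m.idxOf i := by omega
    have hR : Rord e j i := pairwise_of_indexOf_lt hpw (hmem_m j) (hmem_m i) hlt
    rcases hR with h | ⟨h, -⟩
    · exact le_of_lt h
    · exact le_of_eq h.symm
  refine ⟨parta, partb, ?_⟩
  rw [ecomp]
  split_ifs with h
  · exact Finset.sup'_le h _ partb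
  · have hv : 0 ≤ (B j).2 := (hB j).2
    have hd : 0 ≤ dhat f (B j).1 := by
      apply Finset.sum_nonneg
      intro i _
      exact mul_nonneg (Nat.cast_nonneg _) (le_of_lt (hf i))
    exact div_nonneg hv (Real.rpow_nonneg hd q)

end
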